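/- The set of lattice points in the convex hull of A ∪ B in R^4, where A = {(4,1,0,0), (0,4,1,0), (0,0,4,1), (1,0,0,4)} and B = {(2,1,1,1), (1,2,1,1), (1,1,2,1), (1,1,1,2)}, is exactly A ∪ B. -/

import Mathlib

set_option maxHeartbeats 1000000

/-- Coercion of an integer lattice point to a real vector. -/
def toR {n : ℕ} (z : Fin n → ℤ) : Fin n → ℝ := fun i => (z i : ℝ)

/-- The four "outer" points of Example 2. -/
def exA : Set (Fin 4 → ℤ) :=
  {![4, 1, 0, 0], ![0, 4, 1, 0], ![0, 0, 4, 1], ![1, 0, 0, 4]}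

/-- The four "inner" points of Example 2. -/
def exB : Set (Fin 4 → ℤ) :=
  {![2, 1, 1, 1], ![1, 2, 1, 1], ![1, 1, 2, 1], ![1, 1, 1, 2]}

/-- The enclosing convex region cut out by the four facet inequalities and the hyperplane. -/
def exS : Set (Fin 4 → ℝ) :=
  {x | -41 * x 0 + 11 * x 1 + 7 * x 2 + 23 * x 3 ≤ 51 ∧
       7 * x 0 + 23 * x 1 - 41 * x 2 + 11 * x 3 ≤ 51 ∧
       11 * x 0 + 7 * x 1 + 23 * x 2 - 41 * x 3 ≤ 51 ∧
       23 * x 0 - 41 * x 1 + 11 * x 2 + 7 * x 3 ≤ 51 ∧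
       x 0 + x 1 + x 2 + x 3 = 5}

lemma convex_exS : Convex ℝ exS := by
  intro x hx y hy a b ha hb hab
  obtain ⟨h1, h2, h3, h4, h5⟩ := hx
  obtain ⟨k1, k2, k3, k4, k5⟩ := hy
  refine ⟨?_, ?_, ?_, ?_, ?_⟩ <;> simp only [Pi.add_apply, Pi.smul_apply, smul_eq_mul] <;>
    nlinarith [mul_le_mul_of_nonneg_left h1 ha, mul_le_mul_of_nonneg_left k1 hb,
      mul_le_mul_of_nonneg_left h2 ha, mul_le_mul_of_nonneg_left k2 hb,
      mul_le_mul_of_nonneg_left h3 ha, mul_le_mul_of_nonneg_left k3 hb,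
      mul_le_mul_of_nonneg_left h4 ha, mul_le_mul_of_nonneg_left k4 hb]

lemma pts_sub : toR '' (exA ∪ exB) ⊆ exS := by
  rintro x ⟨z, hz, rfl⟩
  rcases hz with (rfl | rfl | rfl | rfl) | (rfl | rfl | rfl | rfl) <;>
    refine ⟨?_, ?_, ?_, ?_, ?_⟩ <;> norm_num [toR, exS, Matrix.cons_val_two, Matrix.vecHead, Matrix.vecTail,
      show ∀ a b c d : ℤ, ![a, b, c, d] 3 = d from fun _ _ _ _ => rfl]

lemma auxdec : ∀ a b c : Fin 5,
    16 ≤ 16*a.val+3*b.val+4*c.val → 3*b.val+1 ≤ a.val+13*c.val →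
    13*a.val+12*b.val+16*c.val ≤ 64 → 4*a.val+c.val ≤ 4+12*b.val → a.val+b.val+c.val ≤ 5 →
    (a.val=4∧b.val=1∧c.val=0)∨(a.val=0∧b.val=4∧c.val=1)∨(a.val=0∧b.val=0∧c.val=4)∨
    (a.val=1∧b.val=0∧c.val=0)∨(a.val=2∧b.val=1∧c.val=1)∨(a.val=1∧b.val=2∧c.val=1)∨
    (a.val=1∧b.val=1∧c.val=2)∨(a.val=1∧b.val=1∧c.val=1) := by decide

lemma int_case (a b c d : ℤ)
    (i1 : -41*a + 11*b + 7*c + 23*d ≤ 51)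
    (i2 : 7*a + 23*b - 41*c + 11*d ≤ 51)
    (i3 : 11*a + 7*b + 23*c - 41*d ≤ 51)
    (i4 : 23*a - 41*b + 11*c + 7*d ≤ 51)
    (i5 : a + b + c + d = 5) :
    (a=4∧b=1∧c=0∧d=0)∨(a=0∧b=4∧c=1∧d=0)∨(a=0∧b=0∧c=4∧d=1)∨(a=1∧b=0∧c=0∧d=4)∨
    (a=2∧b=1∧c=1∧d=1)∨(a=1∧b=2∧c=1∧d=1)∨(a=1∧b=1∧c=2∧d=1)∨(a=1∧b=1∧c=1∧d=2) := by
  have j1 : -16*a - 3*b - 4*c ≤ -16 := by linarith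
  have j2 : -a + 3*b - 13*c ≤ -1 := by linarith
  have j3 : 13*a + 12*b + 16*c ≤ 64 := by linarith
  have j4 : 4*a - 12*b + c ≤ 4 := by linarith
  have hb0 : 0 ≤ a := by linarith
  have hb1 : 0 ≤ b := by linarith
  have hb2 : 0 ≤ c := by linarith
  have hb3 : 0 ≤ d := by linarith
  have hu0 : a ≤ 4 := by linarith
  have hu1 : b ≤ 4 := by linarith
  have hu2 : c ≤ 4 := by linarith
  clear i1 i2 i3 i4
  obtain ⟨a', rfl⟩ : ∃ n : ℕ, (n : ℤ) = a := ⟨a.toNat, Int.toNat_of_nonneg hb0⟩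
  obtain ⟨b', rfl⟩ : ∃ n : ℕ, (n : ℤ) = b := ⟨b.toNat, Int.toNat_of_nonneg hb1⟩
  obtain ⟨c', rfl⟩ : ∃ n : ℕ, (n : ℤ) = c := ⟨c.toNat, Int.toNat_of_nonneg hb2⟩
  have ha5 : a' < 5 := by omega
  have hb5 : b' < 5 := by omega
  have hc5 : c' < 5 := by omega
  have := auxdec ⟨a', ha5⟩ ⟨b', hb5⟩ ⟨c', hc5⟩ (by push_cast at j1 ⊢; omega)
    (by push_cast at j2 ⊢; omega) (by push_cast at j3 ⊢; omega)
    (by push_cast at j4 ⊢; omega) (by push_cast at i5 ⊢; omega)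
  simp only [Fin.val_mk] at this
  rcases this with ⟨e1,e2,e3⟩|⟨e1,e2,e3⟩|⟨e1,e2,e3⟩|⟨e1,e2,e3⟩|⟨e1,e2,e3⟩|⟨e1,e2,e3⟩|⟨e1,e2,e3⟩|⟨e1,e2,e3⟩ <;>
    subst e1 e2 e3 <;> norm_num at i5 ⊢ <;> omega

theorem example2_lattice_points :
    {z : Fin 4 → ℤ | toR z ∈ convexHull ℝ (toR '' (exA ∪ exB))} = exA ∪ exB := by
  ext z
  simp only [Set.mem_setOf_eq]
  constructor
  · intro hz
    have hS : toR z ∈ exS := convexHull_min pts_sub convex_exS hz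
    obtain ⟨h1, h2, h3, h4, h5⟩ := hS
    simp only [toR] at h1 h2 h3 h4 h5
    have i1 : -41 * z 0 + 11 * z 1 + 7 * z 2 + 23 * z 3 ≤ 51 := by exact_mod_cast h1
    have i2 : 7 * z 0 + 23 * z 1 - 41 * z 2 + 11 * z 3 ≤ 51 := by exact_mod_cast h2
    have i3 : 11 * z 0 + 7 * z 1 + 23 * z 2 - 41 * z 3 ≤ 51 := by exact_mod_cast h3
    have i4 : 23 * z 0 - 41 * z 1 + 11 * z 2 + 7 * z 3 ≤ 51 := by exact_mod_cast h4
    have i5 : z 0 + z 1 + z 2 + z 3 = 5 := by exact_mod_cast h5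
    have hz' : ∀ a b c d : ℤ, z 0 = a → z 1 = b → z 2 = c → z 3 = d → z = ![a,b,c,d] := by
      intro a b c d e0 e1 e2 e3
      funext i; fin_cases i <;> simpa
    rcases int_case _ _ _ _ i1 i2 i3 i4 i5 with ⟨e0,e1,e2,e3⟩|⟨e0,e1,e2,e3⟩|⟨e0,e1,e2,e3⟩|
      ⟨e0,e1,e2,e3⟩|⟨e0,e1,e2,e3⟩|⟨e0,e1,e2,e3⟩|⟨e0,e1,e2,e3⟩|⟨e0,e1,e2,e3⟩ <;>
      rw [hz' _ _ _ _ e0 e1 e2 e3]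
    · exact Or.inl (Or.inl rfl)
    · exact Or.inl (Or.inr (Or.inl rfl))
    · exact Or.inl (Or.inr (Or.inr (Or.inl rfl)))
    · exact Or.inl (Or.inr (Or.inr (Or.inr rfl)))
    · exact Or.inr (Or.inl rfl)
    · exact Or.inr (Or.inr (Or.inl rfl))
    · exact Or.inr (Or.inr (Or.inr (Or.inl rfl)))
    · exact Or.inr (Or.inr (Or.inr (Or.inr rfl)))
  · intro hz
    exact subset_convexHull ℝ _ (Set.mem_image_of_mem _ hz)
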